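/- Let H_*(B) and H_*^{S^1}(B) be graded rational vector spaces fitting into a long exact (Gysin-type) sequence ... → H_i(B) → H_i^{S^1}(B) → H_{i-2}^{S^1}(B) → H_{i-1}(B) → ... . Suppose each H_i(B) is finite dimensional, there is N_0 such that H_i(B)=0 for |i|>N_0, the dimensions dim H_i^{S^1}(B) are uniformly bounded, and H_*^{S^1}(B) is index-positive (i.e. there is N with H_i^{S^1}(B)=0 for all i<N). Then the mean Euler characteristic χ_m(H_*^{S^1}(B)) := lim_{N→∞} (1/N) Σ_{i=-N}^{N} (-1)^i dim H_i^{S^1}(B) exists and equals χ(H_*(B))/2, where χ(H_*(B)) = Σ_i (-1)^i dim H_i(B). -/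

import Mathlib

open Filter Finset Topology



lemma tendsto_of_two_step (g : ℕ → ℝ) (χ : ℝ) (M₀ : ℕ)
    (h2 : ∀ N : ℕ, M₀ ≤ N → g (N + 2) = g N + χ) :
    Tendsto (fun N : ℕ => (1 / (N : ℝ)) * g N) atTop (𝓝 (χ / 2)) := by
  set B : ℝ := max |g M₀ - (M₀ : ℝ) * χ / 2| |g (M₀ + 1) - ((M₀ : ℝ) + 1) * χ / 2| with hB
  have key : ∀ m : ℕ, |g (M₀ + m) - ((M₀ : ℝ) + m) * χ / 2| ≤ B := by
    intro m
    induction m using Nat.strong_induction_on with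
    | _ m ih =>
      match m with
      | 0 => simp only [Nat.add_zero, Nat.cast_zero, add_zero]; exact le_max_left _ _
      | 1 => simp only [Nat.cast_one]; exact le_max_right _ _
      | (k + 2) =>
        have he : M₀ + (k + 2) = (M₀ + k) + 2 := by omega
        have ihk := ih k (by omega)
        have harg : g (M₀ + k + 2) - ((M₀ : ℝ) + ((k : ℝ) + 2)) * χ / 2
            = g (M₀ + k) - ((M₀ : ℝ) + (k : ℝ)) * χ / 2 := by
          rw [h2 (M₀ + k) (Nat.le_add_right _ _)]; ring
        rw [he]
        push_cast
        rw [harg]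
        push_cast at ihk
        exact ihk
  have key' : ∀ N : ℕ, M₀ ≤ N → |g N - (N : ℝ) * χ / 2| ≤ B := by
    intro N hN
    have h := key (N - M₀)
    rw [Nat.add_sub_cancel' hN, Nat.cast_sub hN] at h
    have e : (M₀ : ℝ) + ((N : ℝ) - (M₀ : ℝ)) = (N : ℝ) := by ring
    rwa [e] at h
  have h0 : Tendsto (fun N : ℕ => (1 / (N : ℝ)) * g N - χ / 2) atTop (𝓝 0) := by
    refine squeeze_zero_norm' ?_ (tendsto_const_div_atTop_nhds_zero_nat B)
    filter_upwards [eventually_ge_atTop (max M₀ 1)] with N hN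
    have hN1 : (1 : ℕ) ≤ N := le_trans (le_max_right _ _) hN
    have hM : M₀ ≤ N := le_trans (le_max_left _ _) hN
    have hNpos : (0 : ℝ) < N := by exact_mod_cast hN1
    have hne : (N : ℝ) ≠ 0 := ne_of_gt hNpos
    have e : (1 / (N : ℝ)) * g N - χ / 2 = (g N - (N : ℝ) * χ / 2) / N := by
      field_simp
    rw [e, Real.norm_eq_abs, abs_div, abs_of_pos hNpos]
    exact div_le_div_of_nonneg_right (key' N hM) hNpos.le
  have := h0.add_const (χ / 2)
  simpa using this

lemma neg_one_zpow_sub_one (i : ℤ) : (-1 : ℝ) ^ (i - 1) = -(-1 : ℝ) ^ i := by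
  rw [zpow_sub_one₀ (by norm_num : (-1 : ℝ) ≠ 0)]
  norm_num

lemma neg_one_zpow_add_one (i : ℤ) : (-1 : ℝ) ^ (i + 1) = -(-1 : ℝ) ^ i := by
  rw [zpow_add_one₀ (by norm_num : (-1 : ℝ) ≠ 0)]
  ring

lemma aux_mec (s b a : ℤ → ℝ) (N₀ : ℕ) (N₁ : ℤ)
    (hs0 : ∀ i, 0 ≤ s i) (ha0 : ∀ i, 0 ≤ a i)
    (hsub : ∀ i : ℤ, s i - s (i - 2) = a i + a (i - 1) - b (i - 1))
    (hab : ∀ i, a i ≤ b i) (has : ∀ i, a i ≤ s i)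
    (hbz : ∀ i : ℤ, (N₀ : ℤ) < |i| → b i = 0)
    (hsz : ∀ i < N₁, s i = 0) :
    Tendsto
      (fun N : ℕ =>
        (1 / (N : ℝ)) * ∑ i ∈ Finset.Icc (-(N : ℤ)) (N : ℤ), (-1 : ℝ) ^ i * s i)
      atTop
      (𝓝 ((∑ i ∈ Finset.Icc (-(N₀ : ℤ)) (N₀ : ℤ), (-1 : ℝ) ^ i * b i) / 2)) := by
  set χ : ℝ := ∑ i ∈ Finset.Icc (-(N₀ : ℤ)) (N₀ : ℤ), (-1 : ℝ) ^ i * b i with hχ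
  set D : ℤ → ℝ := fun i => (-1 : ℝ) ^ i * (s i - s (i - 1) - a i) with hD
  -- single telescoping step
  have hstep : ∀ i : ℤ, D i = D (i - 1) + (-1 : ℝ) ^ (i - 1) * b (i - 1) := by
    intro i
    have h2 : i - 1 - 1 = i - 2 := by ring
    simp only [hD, h2, neg_one_zpow_sub_one]
    have hs := hsub i
    linear_combination ((-1 : ℝ) ^ i) * hs
  -- telescoping
  have htel : ∀ n : ℕ, ∀ L : ℤ,
      D (L + n) = D L + ∑ j ∈ Finset.Icc L (L + n - 1), (-1 : ℝ) ^ j * b j := by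
    intro n
    induction n with
    | zero =>
      intro L
      rw [Finset.Icc_eq_empty (by omega : ¬ L ≤ L + (0 : ℕ) - 1)]
      simp
    | succ n ih =>
      intro L
      have hcast : (L + ((n : ℕ) + 1 : ℕ) : ℤ) = (L + n) + 1 := by push_cast; ring
      have hstep' := hstep (L + n + 1)
      have h1 : (L + n + 1 : ℤ) - 1 = L + n := by ring
      rw [h1] at hstep'
      have hins : Finset.Icc L (L + (n : ℤ) + 1 - 1) =
          insert (L + n) (Finset.Icc L (L + n - 1)) := by
        ext x
        simp only [Finset.mem_Icc, Finset.mem_insert]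
        omega
      rw [hcast, hstep', ih L, hins, Finset.sum_insert (by simp only [Finset.mem_Icc]; omega)]
      ring
  -- D K = χ for K ≥ N₀ + 1
  have hDK : ∀ K : ℤ, (N₀ : ℤ) + 1 ≤ K → D K = χ := by
    intro K hK
    set L₀ : ℤ := min (N₁ - 1) (-(N₀ : ℤ) - 1) with hL₀
    have hm1 := min_le_left (N₁ - 1) (-(N₀ : ℤ) - 1)
    have hm2 := min_le_right (N₁ - 1) (-(N₀ : ℤ) - 1)
    have hL₀K : L₀ ≤ K := by omega
    have hn : K = L₀ + ((K - L₀).toNat : ℤ) := by omega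
    have hDL₀ : D L₀ = 0 := by
      have h1 : s L₀ = 0 := hsz L₀ (by omega)
      have h2 : s (L₀ - 1) = 0 := hsz (L₀ - 1) (by omega)
      have h3 : a L₀ = 0 := le_antisymm (by rw [← h1]; exact has L₀) (ha0 L₀)
      simp only [hD, h1, h2, h3]
      ring
    rw [hn, htel ((K - L₀).toNat) L₀, hDL₀, zero_add, hχ]
    refine (Finset.sum_subset ?_ ?_).symm
    · intro x hx
      simp only [Finset.mem_Icc] at hx ⊢
      omega
    · intro x hx hnx
      simp only [Finset.mem_Icc] at hx hnx
      have : b x = 0 := hbz x (lt_abs.mpr (by omega))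
      rw [this, mul_zero]
  -- consecutive pair sum
  have hpair : ∀ i : ℤ, (N₀ : ℤ) ≤ i →
      (-1 : ℝ) ^ i * s i + (-1 : ℝ) ^ (i + 1) * s (i + 1) = χ := by
    intro i hi
    have hDi := hDK (i + 1) (by omega)
    have h1 : (i + 1 : ℤ) - 1 = i := by ring
    have ha1 : a (i + 1) = 0 := by
      have hb1 : b (i + 1) = 0 := hbz (i + 1) (lt_abs.mpr (by omega))
      exact le_antisymm (by rw [← hb1]; exact hab (i + 1)) (ha0 (i + 1))
    simp only [hD, h1, ha1, neg_one_zpow_add_one] at hDi ⊢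
    linear_combination hDi
  -- two-step recurrence for partial sums
  have hT2 : ∀ N : ℕ, N₀ + N₁.natAbs ≤ N →
      (∑ i ∈ Finset.Icc (-((N + 2 : ℕ) : ℤ)) ((N + 2 : ℕ) : ℤ), (-1 : ℝ) ^ i * s i)
      = (∑ i ∈ Finset.Icc (-(N : ℤ)) (N : ℤ), (-1 : ℝ) ^ i * s i) + χ := by
    intro N hN
    have hcast : ((N + 2 : ℕ) : ℤ) = (N : ℤ) + 2 := by push_cast; ring
    rw [hcast]
    have hins : Finset.Icc (-((N : ℤ) + 2)) ((N : ℤ) + 2) =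
        insert (-(N : ℤ) - 2) (insert (-(N : ℤ) - 1)
          (insert ((N : ℤ) + 2) (insert ((N : ℤ) + 1) (Finset.Icc (-(N : ℤ)) (N : ℤ))))) := by
      ext x
      simp only [Finset.mem_Icc, Finset.mem_insert]
      omega
    rw [hins, Finset.sum_insert (by simp only [Finset.mem_insert, Finset.mem_Icc]; omega),
      Finset.sum_insert (by simp only [Finset.mem_insert, Finset.mem_Icc]; omega),
      Finset.sum_insert (by simp only [Finset.mem_insert, Finset.mem_Icc]; omega),
      Finset.sum_insert (by simp only [Finset.mem_Icc]; omega)]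
    have hz1 : s (-(N : ℤ) - 2) = 0 := hsz _ (by omega)
    have hz2 : s (-(N : ℤ) - 1) = 0 := hsz _ (by omega)
    have hp := hpair ((N : ℤ) + 1) (by omega)
    have h1 : ((N : ℤ) + 1) + 1 = (N : ℤ) + 2 := by ring
    rw [h1] at hp
    rw [hz1, hz2, mul_zero, mul_zero]
    linarith
  exact tendsto_of_two_step
    (fun N : ℕ => ∑ i ∈ Finset.Icc (-(N : ℤ)) (N : ℤ), (-1 : ℝ) ^ i * s i)
    χ (N₀ + N₁.natAbs) hT2


/-- Mean Euler characteristic from a Gysin-type long exact sequence, index-positive case. -/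
theorem stmt0
    (HB HS : ℤ → Type) [∀ i, AddCommGroup (HB i)] [∀ i, Module ℚ (HB i)]
    [∀ i, AddCommGroup (HS i)] [∀ i, Module ℚ (HS i)]
    [∀ i, FiniteDimensional ℚ (HB i)] [∀ i, FiniteDimensional ℚ (HS i)]
    (α : ∀ i : ℤ, HB i →ₗ[ℚ] HS i)
    (β : ∀ i : ℤ, HS i →ₗ[ℚ] HS (i - 2))
    (γ : ∀ i : ℤ, HS (i - 2) →ₗ[ℚ] HB (i - 1))
    (hαβ : ∀ i, Function.Exact (α i) (β i))
    (hβγ : ∀ i, Function.Exact (β i) (γ i))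
    (hγα : ∀ i, Function.Exact (γ i) (α (i - 1)))
    (N₀ : ℕ) (hvanish : ∀ i : ℤ, (N₀ : ℤ) < |i| → Subsingleton (HB i))
    (C : ℕ) (hbound : ∀ i, Module.finrank ℚ (HS i) < C)
    (N₁ : ℤ) (hidxpos : ∀ i < N₁, Subsingleton (HS i)) :
    Tendsto
      (fun N : ℕ =>
        (1 / (N : ℝ)) *
          ∑ i ∈ Finset.Icc (-(N : ℤ)) (N : ℤ), (-1 : ℝ) ^ i * (Module.finrank ℚ (HS i) : ℝ))
      atTop
      (𝓝 ((∑ i ∈ Finset.Icc (-(N₀ : ℤ)) (N₀ : ℤ),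
            (-1 : ℝ) ^ i * (Module.finrank ℚ (HB i) : ℝ)) / 2)) := by
  set s : ℤ → ℝ := fun i => (Module.finrank ℚ (HS i) : ℝ) with hs
  set b : ℤ → ℝ := fun i => (Module.finrank ℚ (HB i) : ℝ) with hb
  set a : ℤ → ℝ := fun i => (Module.finrank ℚ (LinearMap.range (α i)) : ℝ) with ha
  have h1 : ∀ i : ℤ, Module.finrank ℚ (HS i)
      = Module.finrank ℚ (LinearMap.range (β i)) + Module.finrank ℚ (LinearMap.range (α i)) := by
    intro i
    have hker : LinearMap.ker (β i) = LinearMap.range (α i) :=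
      LinearMap.exact_iff.mp (hαβ i)
    rw [← hker, LinearMap.finrank_range_add_finrank_ker (β i)]
  have h2 : ∀ i : ℤ, Module.finrank ℚ (HS (i - 2))
      = Module.finrank ℚ (LinearMap.range (γ i)) + Module.finrank ℚ (LinearMap.range (β i)) := by
    intro i
    have hker : LinearMap.ker (γ i) = LinearMap.range (β i) :=
      LinearMap.exact_iff.mp (hβγ i)
    rw [← hker, LinearMap.finrank_range_add_finrank_ker (γ i)]
  have h3 : ∀ i : ℤ, Module.finrank ℚ (HB (i - 1))
      = Module.finrank ℚ (LinearMap.range (α (i - 1))) + Module.finrank ℚ (LinearMap.range (γ i)) := by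
    intro i
    have hker : LinearMap.ker (α (i - 1)) = LinearMap.range (γ i) :=
      LinearMap.exact_iff.mp (hγα i)
    rw [← hker, LinearMap.finrank_range_add_finrank_ker (α (i - 1))]
  have hsub : ∀ i : ℤ, s i - s (i - 2) = a i + a (i - 1) - b (i - 1) := by
    intro i
    have e1 : s i = (Module.finrank ℚ (LinearMap.range (β i)) : ℝ) + a i := by
      simp only [hs, ha]; exact_mod_cast congrArg (Nat.cast : ℕ → ℝ) (h1 i)
    have e2 : s (i - 2) = (Module.finrank ℚ (LinearMap.range (γ i)) : ℝ)
        + (Module.finrank ℚ (LinearMap.range (β i)) : ℝ) := by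
      simp only [hs]; exact_mod_cast congrArg (Nat.cast : ℕ → ℝ) (h2 i)
    have e3 : b (i - 1) = a (i - 1) + (Module.finrank ℚ (LinearMap.range (γ i)) : ℝ) := by
      simp only [hb, ha]; exact_mod_cast congrArg (Nat.cast : ℕ → ℝ) (h3 i)
    linarith
  have hab : ∀ i, a i ≤ b i := by
    intro i
    simp only [ha, hb]
    exact_mod_cast (α i).finrank_range_le
  have has : ∀ i, a i ≤ s i := by
    intro i
    simp only [ha, hs]
    exact_mod_cast Submodule.finrank_le (LinearMap.range (α i))
  have hbz : ∀ i : ℤ, (N₀ : ℤ) < |i| → b i = 0 := by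
    intro i hi
    have := hvanish i hi
    simp only [hb]
    exact_mod_cast Module.finrank_zero_of_subsingleton
  have hsz : ∀ i < N₁, s i = 0 := by
    intro i hi
    have := hidxpos i hi
    simp only [hs]
    exact_mod_cast Module.finrank_zero_of_subsingleton
  exact aux_mec s b a N₀ N₁ (fun i => by simp only [hs]; positivity)
    (fun i => by simp only [ha]; positivity) hsub hab has hbz hsz
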